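/- For each integer n ≥ 3, let θ*ₙ ∈ (0,1) denote the unique zero of I_n(θ) = θ·log(1−θ) + n(θ + (1−θ)log(1−θ)) in (0,1), and set pˢₙ = h(θ*ₙ). Then: (i) θ*ₙ is strictly increasing in n and θ*ₙ → 1 as n → ∞; (ii) pˢₙ is strictly decreasing in n and pˢₙ → 0 as n → ∞; (iii) for any fixed p ∈ (0,1), for all n with p > pˢₙ the quantity kₙ = (p − pˢₙ)/(1 − pˢₙ) is strictly increasing in n and kₙ → p as n → ∞. -/

import Mathlib

open Filter

noncomputable def h (θ : ℝ) : ℝ := (1 - θ) * (1 - Real.log (1 - θ))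

noncomputable def I (n : ℕ) (θ : ℝ) : ℝ :=
  θ * Real.log (1 - θ) + n * (θ + (1 - θ) * Real.log (1 - θ))

lemma log_one_sub_lt {θ : ℝ} (h0 : 0 < θ) (h1 : θ < 1) : Real.log (1 - θ) < -θ := by
  have := Real.log_lt_sub_one_of_pos (x := 1 - θ) (by linarith) (by intro e; linarith)
  linarith

lemma log_one_sub_le {θ : ℝ} (h1 : θ < 1) : Real.log (1 - θ) ≤ -θ := by
  have := Real.log_le_sub_one_of_pos (x := 1 - θ) (by linarith)
  linarith

lemma g_pos {θ : ℝ} (h0 : 0 < θ) (h1 : θ < 1) :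
    0 < θ + (1 - θ) * Real.log (1 - θ) := by
  have hx : (0:ℝ) < 1 - θ := by linarith
  have hinv : (0:ℝ) < (1 - θ)⁻¹ := by positivity
  have hne : (1 - θ)⁻¹ ≠ 1 := by
    intro e
    have : (1 - θ) = 1 := by
      field_simp at e; linarith
    linarith
  have hlt := Real.log_lt_sub_one_of_pos hinv hne
  rw [Real.log_inv] at hlt
  have hmul : (1 - θ) * (1 - θ)⁻¹ = 1 := mul_inv_cancel₀ (ne_of_gt hx)
  nlinarith [mul_pos hx hinv]

lemma hasDerivAt_I (n : ℕ) {θ : ℝ} (hθ : θ ≠ 1) :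
    HasDerivAt (I n) ((1 - (n:ℝ)) * Real.log (1 - θ) - θ / (1 - θ)) θ := by
  have hne : (1:ℝ) - θ ≠ 0 := sub_ne_zero.2 (Ne.symm hθ)
  have hsub : HasDerivAt (fun x : ℝ => 1 - x) (-1) θ := (hasDerivAt_id θ).const_sub 1
  have hL : HasDerivAt (fun x : ℝ => Real.log (1 - x)) (-1 / (1 - θ)) θ := hsub.log hne
  have h1 : HasDerivAt (fun x : ℝ => x * Real.log (1 - x))
      (1 * Real.log (1 - θ) + θ * (-1 / (1 - θ))) θ := (hasDerivAt_id θ).mul hL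
  have h2 : HasDerivAt (fun x : ℝ => x + (1 - x) * Real.log (1 - x))
      (1 + ((-1) * Real.log (1 - θ) + (1 - θ) * (-1 / (1 - θ)))) θ :=
    (hasDerivAt_id θ).add (hsub.mul hL)
  have h3 := h1.add (h2.const_mul (n:ℝ))
  convert h3 using 1
  case e'_4 => rfl
  case e'_5 => rfl
  case e'_8 => rfl
  rw [show (1 - θ) * (-1 / (1 - θ)) = -1 by rw [mul_div_assoc', mul_neg_one, neg_div, div_self hne]]
  ring

lemma contI (n : ℕ) : ContinuousOn (I n) (Set.Iio (1:ℝ)) := fun x hx =>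
  (hasDerivAt_I n (ne_of_lt hx)).continuousAt.continuousWithinAt

lemma I_zero (n : ℕ) : I n 0 = 0 := by simp [I]

lemma I_strictMono (n : ℕ) (hn : 3 ≤ n) :
    StrictMonoOn (I n) (Set.Icc (0:ℝ) (1/2)) := by
  apply strictMonoOn_of_deriv_pos (convex_Icc _ _)
  · exact (contI n).mono (fun x hx => lt_of_le_of_lt hx.2 (by norm_num))
  · intro x hx
    rw [interior_Icc] at hx
    obtain ⟨hx0, hx1⟩ := hx
    rw [(hasDerivAt_I n (by intro e; rw [e] at hx1; norm_num at hx1)).deriv]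
    have hL := log_one_sub_lt hx0 (by linarith)
    have hn3 : (3:ℝ) ≤ (n:ℝ) := by exact_mod_cast hn
    have hdiv : x / (1 - x) < 2 * x := by
      rw [div_lt_iff₀ (by linarith)]; nlinarith
    nlinarith [mul_nonneg (by linarith : (0:ℝ) ≤ (n:ℝ) - 3)
      (by linarith : 0 ≤ -Real.log (1 - x))]

lemma I_pos_small (n : ℕ) (hn : 3 ≤ n) {θ : ℝ} (h0 : 0 < θ) (h1 : θ ≤ 1/2) :
    0 < I n θ := by
  have := I_strictMono n hn (Set.mem_Icc.2 ⟨le_refl _, by norm_num⟩)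
    (Set.mem_Icc.2 ⟨le_of_lt h0, h1⟩) h0
  rwa [I_zero] at this

lemma I_neg_big (n : ℕ) (hn : 3 ≤ n) {θ : ℝ}
    (hge : 1 - Real.exp (-(2 * (n:ℝ) + 2)) ≤ θ) (h1 : θ < 1) : I n θ < 0 := by
  have hx : (0:ℝ) < 1 - θ := by linarith
  have hn3 : (3:ℝ) ≤ (n:ℝ) := by exact_mod_cast hn
  have hadd : (2 * (n:ℝ) + 3) ≤ Real.exp (2 * (n:ℝ) + 2) := by
    have := Real.add_one_le_exp (2 * (n:ℝ) + 2); linarith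
  have hexp : Real.exp (-(2 * (n:ℝ) + 2)) ≤ 1 / (2 * (n:ℝ) + 3) := by
    rw [Real.exp_neg, inv_eq_one_div]
    exact one_div_le_one_div_of_le (by linarith) hadd
  have hhalf : (1:ℝ)/2 ≤ θ := by
    have : (1:ℝ) / (2 * (n:ℝ) + 3) ≤ 1/2 := by
      rw [div_le_div_iff₀ (by linarith) (by norm_num)]; linarith
    linarith
  have hL : Real.log (1 - θ) ≤ -(2 * (n:ℝ) + 2) := by
    have := Real.log_le_log hx (by linarith : 1 - θ ≤ Real.exp (-(2 * (n:ℝ) + 2)))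
    rwa [Real.log_exp] at this
  simp only [I]
  nlinarith [mul_nonneg (by linarith : (0:ℝ) ≤ 1 - θ)
      (by linarith : (0:ℝ) ≤ -Real.log (1 - θ)),
    mul_nonneg (by linarith : (0:ℝ) ≤ θ - 1/2)
      (by linarith : (0:ℝ) ≤ -Real.log (1 - θ))]

lemma I_pos_of_lt (n : ℕ) (hn : 3 ≤ n) {t : ℝ} (ht : t ∈ Set.Ioo (0:ℝ) 1)
    (hu : ∀ θ ∈ Set.Ioo (0:ℝ) 1, I n θ = 0 → θ = t)
    {θ : ℝ} (hθ : θ ∈ Set.Ioo (0:ℝ) 1) (hlt : θ < t) : 0 < I n θ := by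
  rcases lt_or_ge (1/2 : ℝ) θ with hbig | hsmall
  · by_contra hcon
    push_neg at hcon
    rcases eq_or_lt_of_le hcon with heq | hneg
    · exact absurd (hu θ hθ heq) (ne_of_lt hlt)
    · have hpos : 0 < I n (1/2) := I_pos_small n hn (by norm_num) le_rfl
      have hcont : ContinuousOn (I n) (Set.Icc (1/2:ℝ) θ) :=
        (contI n).mono (fun x hx => lt_of_le_of_lt hx.2 hθ.2)
      have : (0:ℝ) ∈ Set.Ioo (I n θ) (I n (1/2)) := ⟨hneg, hpos⟩
      obtain ⟨z, hz, hz0⟩ := intermediate_value_Ioo' (le_of_lt hbig) hcont this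
      have hz1 : z ∈ Set.Ioo (0:ℝ) 1 := ⟨by have := hz.1; linarith, lt_trans hz.2 hθ.2⟩
      have hzt := hu z hz1 hz0
      rw [hzt] at hz
      linarith [hz.2]
  · exact I_pos_small n hn hθ.1 hsmall

lemma I_neg_of_gt (n : ℕ) (hn : 3 ≤ n) {t : ℝ} (ht : t ∈ Set.Ioo (0:ℝ) 1)
    (hu : ∀ θ ∈ Set.Ioo (0:ℝ) 1, I n θ = 0 → θ = t)
    {θ : ℝ} (hθ : θ ∈ Set.Ioo (0:ℝ) 1) (hgt : t < θ) : I n θ < 0 := by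
  set b : ℝ := 1 - Real.exp (-(2 * (n:ℝ) + 2)) with hb
  rcases le_or_gt b θ with hbig | hsmall
  · exact I_neg_big n hn hbig hθ.2
  · by_contra hcon
    push_neg at hcon
    rcases eq_or_lt_of_le hcon with heq | hpos
    · exact absurd (hu θ hθ heq.symm) (ne_of_gt hgt)
    · have hb1 : b < 1 := by
        have := Real.exp_pos (-(2 * (n:ℝ) + 2)); simp only [hb]; linarith
      have hneg : I n b < 0 := I_neg_big n hn le_rfl hb1
      have hcont : ContinuousOn (I n) (Set.Icc θ b) :=
        (contI n).mono (fun x hx => lt_of_le_of_lt hx.2 hb1)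
      have : (0:ℝ) ∈ Set.Ioo (I n b) (I n θ) := ⟨hneg, hpos⟩
      obtain ⟨z, hz, hz0⟩ := intermediate_value_Ioo' (le_of_lt hsmall) hcont this
      have hz1 : z ∈ Set.Ioo (0:ℝ) 1 := ⟨lt_trans hθ.1 hz.1, lt_trans hz.2 hb1⟩
      have hzt := hu z hz1 hz0
      rw [hzt] at hz
      linarith [hz.1]

lemma phi_mono : StrictMonoOn (fun u : ℝ => u * (1 - Real.log u)) (Set.Ioc (0:ℝ) 1) := by
  apply strictMonoOn_of_deriv_pos (convex_Ioc _ _)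
  · apply ContinuousOn.mul continuousOn_id
    exact ContinuousOn.sub continuousOn_const
      (fun x hx => (Real.continuousAt_log (ne_of_gt hx.1)).continuousWithinAt)
  · intro x hx
    rw [interior_Ioc] at hx
    have hx0 := hx.1
    have hd : HasDerivAt (fun u : ℝ => u * (1 - Real.log u))
        (1 * (1 - Real.log x) + x * (0 - x⁻¹)) x := by
      exact (hasDerivAt_id x).mul ((hasDerivAt_const x 1).sub (Real.hasDerivAt_log (ne_of_gt hx0)))
    rw [hd.deriv]
    have : Real.log x < 0 := Real.log_neg hx0 hx.2
    field_simp
    linarith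

lemma h_anti {x y : ℝ} (hx : 0 < x) (hxy : x < y) (hy : y < 1) : h y < h x := by
  have := phi_mono (Set.mem_Ioc.2 ⟨by linarith, by linarith⟩)
    (Set.mem_Ioc.2 ⟨by linarith, by linarith⟩) (by linarith : 1 - y < 1 - x)
  simpa [h] using this

lemma h_cont : Continuous h := by
  have : h = fun x => (1 - x) - ((1 - x) * Real.log (1 - x)) := by
    funext x; simp only [h]; ring
  rw [this]
  exact (continuous_const.sub continuous_id).sub
    (Real.continuous_mul_log.comp (continuous_const.sub continuous_id))

lemma h_one : h 1 = 0 := by simp [h]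

/-- with `θ*ₙ` the unique zero of `I_n` in `(0,1)` (for `n ≥ 3`) and
`pˢₙ = h(θ*ₙ)`: (i) `θ*ₙ` is strictly increasing and tends to `1`;
(ii) `pˢₙ` is strictly decreasing and tends to `0`; (iii) for fixed `p ∈ (0,1)`,
among `n` with `p > pˢₙ`, `kₙ = (p−pˢₙ)/(1−pˢₙ)` is strictly increasing and
`kₙ → p`. -/
theorem stmt5 (θs : ℕ → ℝ)
    (hmem : ∀ n, 3 ≤ n → θs n ∈ Set.Ioo (0:ℝ) 1)
    (hzero : ∀ n, 3 ≤ n → I n (θs n) = 0)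
    (huniq : ∀ n, 3 ≤ n → ∀ θ ∈ Set.Ioo (0:ℝ) 1, I n θ = 0 → θ = θs n) :
    (∀ m n, 3 ≤ m → m < n → θs m < θs n) ∧
    Tendsto θs atTop (nhds 1) ∧
    (∀ m n, 3 ≤ m → m < n → h (θs n) < h (θs m)) ∧
    Tendsto (fun n => h (θs n)) atTop (nhds 0) ∧
    (∀ p ∈ Set.Ioo (0:ℝ) 1,
      (∀ m n, 3 ≤ m → m < n → h (θs m) < p →
        (p - h (θs m)) / (1 - h (θs m)) < (p - h (θs n)) / (1 - h (θs n))) ∧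
      Tendsto (fun n => (p - h (θs n)) / (1 - h (θs n))) atTop (nhds p)) := by
  -- a helper: positivity of I n at points below θs n forces ordering
  have key : ∀ n, 3 ≤ n → ∀ θ ∈ Set.Ioo (0:ℝ) 1, 0 < I n θ → θ < θs n := by
    intro n hn θ hθ hpos
    rcases lt_trichotomy θ (θs n) with hlt | heq | hgt
    · exact hlt
    · rw [heq] at hpos; rw [hzero n hn] at hpos; linarith
    · have := I_neg_of_gt n hn (hmem n hn) (huniq n hn) hθ hgt
      linarith
  have mono : ∀ m n, 3 ≤ m → m < n → θs m < θs n := by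
    intro m n h3 hmn
    have hn3 : 3 ≤ n := by omega
    have hm := hmem m h3
    have hg := g_pos hm.1 hm.2
    have hdiff : I n (θs m) = I m (θs m)
        + ((n:ℝ) - (m:ℝ)) * (θs m + (1 - θs m) * Real.log (1 - θs m)) := by
      simp only [I]; ring
    have hnm : (m:ℝ) < (n:ℝ) := by exact_mod_cast hmn
    have hpos : 0 < I n (θs m) := by
      rw [hdiff, hzero m h3]
      nlinarith
    exact key n hn3 (θs m) hm hpos
  have htend : Tendsto θs atTop (nhds 1) := by
    rw [tendsto_order]
    constructor
    · intro a ha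
      rcases le_or_gt a 0 with ha0 | ha0
      · filter_upwards [eventually_ge_atTop 3] with n hn
        exact lt_of_le_of_lt ha0 (hmem n hn).1
      · have hai : a ∈ Set.Ioo (0:ℝ) 1 := ⟨ha0, ha⟩
        have hg := g_pos ha0 ha
        obtain ⟨N, hN⟩ := exists_nat_gt ((-(a * Real.log (1 - a)))
          / (a + (1 - a) * Real.log (1 - a)))
        filter_upwards [eventually_ge_atTop (max 3 N)] with n hn
        have hn3 : 3 ≤ n := le_trans (le_max_left _ _) hn
        have hnN : (N:ℝ) ≤ (n:ℝ) := by exact_mod_cast le_trans (le_max_right _ _) hn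
        have hpos : 0 < I n a := by
          have h1 : (-(a * Real.log (1 - a)))
              / (a + (1 - a) * Real.log (1 - a)) < (n:ℝ) := lt_of_lt_of_le hN hnN
          rw [div_lt_iff₀ hg] at h1
          simp only [I]; nlinarith
        exact key n hn3 a hai hpos
    · intro b hb
      filter_upwards [eventually_ge_atTop 3] with n hn
      exact lt_trans (hmem n hn).2 hb
  have hanti : ∀ m n, 3 ≤ m → m < n → h (θs n) < h (θs m) := by
    intro m n h3 hmn
    have hn3 : 3 ≤ n := by omega
    exact h_anti (hmem m h3).1 (mono m n h3 hmn) (hmem n hn3).2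
  have htend0 : Tendsto (fun n => h (θs n)) atTop (nhds 0) := by
    have := (h_cont.tendsto 1).comp htend
    rwa [h_one] at this
  refine ⟨mono, htend, hanti, htend0, ?_⟩
  intro p hp
  constructor
  · intro m n h3 hmn hpm
    have hqn := hanti m n h3 hmn
    have h1m : 0 < 1 - h (θs m) := by linarith [hp.2]
    have h1n : 0 < 1 - h (θs n) := by linarith
    rw [div_lt_div_iff₀ h1m h1n]
    nlinarith [hp.2]
  · have : Tendsto (fun n => (p - h (θs n)) / (1 - h (θs n))) atTop
        (nhds ((p - 0) / (1 - 0))) := by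
      exact Tendsto.div (tendsto_const_nhds.sub htend0)
        (tendsto_const_nhds.sub htend0) (by norm_num)
    simpa using this
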